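/- Let p(k) denote the number of partitions of the positive integer k into an unordered sum of positive integers, with p(0) = 1. Then the number of equivalence classes of the relation on PT_n given by 'a ≈ b iff (PT_n, *_a) and (PT_n, *_b) are isomorphic semigroups' equals ∑_{k=0}^{n} p(k); that is, there are exactly ∑_{k=0}^{n} p(k) pairwise non-isomorphic semigroups obtained from PT_n by deformed multiplication. -/

import Mathlib

/-- `PT n`: partial transformations of an `n`-element set, modeled as maps
`Fin n → Option (Fin n)` (`none` = undefined). -/
abbrev PT (n : ℕ) := Fin n → Option (Fin n)

/-- Left-to-right composition of partial maps: `(x ⬝ y) i = y (x i)` when defined. -/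
def PT.comp {n : ℕ} (x y : PT n) : PT n := fun i => (x i).bind y

/-- Deformed multiplication by `a`: `x *_a y = x · a · y` (left-to-right). -/
def PT.dmul {n : ℕ} (a x y : PT n) : PT n := PT.comp (PT.comp x a) y

/-- The nowhere defined map `0`. -/
def PT.zero {n : ℕ} : PT n := fun _ => none

/-- `z_a`: the number of points where `a` is undefined. -/
def PT.zcard {n : ℕ} (a : PT n) : ℕ :=
  (Finset.univ.filter fun i : Fin n => a i = none).card

/-- `rank a = |ran a|`. -/
def PT.rank {n : ℕ} (a : PT n) : ℕ :=
  (Finset.univ.filter fun t : Fin n => ∃ i, a i = some t).card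

/-- `α_k(a)`: the number of points `t` whose full preimage `a⁻¹(t)` has exactly `k` elements. -/
def PT.typeCount {n : ℕ} (a : PT n) (k : ℕ) : ℕ :=
  (Finset.univ.filter fun t : Fin n =>
    (Finset.univ.filter fun i : Fin n => a i = some t).card = k).card

/-- A permutation regarded as a (total) partial transformation. -/
def PT.ofPerm {n : ℕ} (σ : Equiv.Perm (Fin n)) : PT n := fun i => some (σ i)

open Finset Polynomial

namespace PTaux
variable {n : ℕ}

def fib (a : PT n) (t : Fin n) : Finset (Fin n) := Finset.univ.filter fun i => a i = some t
def fc (a : PT n) (t : Fin n) : ℕ := (fib a t).card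
def mset (a : PT n) : Multiset ℕ := (Multiset.map (fc a) Finset.univ.val).filter (fun k => k ≠ 0)
def dm (a : PT n) : Finset (Fin n) := Finset.univ.filter fun i => a i ≠ none

lemma dm_card (a : PT n) : (dm a).card = ∑ t, fc a t := by
  classical
  have h : ∀ i ∈ dm a, (a i).getD i ∈ (Finset.univ : Finset (Fin n)) := fun i _ => mem_univ _
  rw [Finset.card_eq_sum_card_fiberwise h]
  refine Finset.sum_congr rfl fun t _ => ?_
  congr 1
  ext i
  simp only [dm, fib, mem_filter, mem_univ, true_and]
  cases hai : a i <;> simp [hai]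

lemma sum_filter_ne_zero (s : Multiset ℕ) : (s.filter (fun k => k ≠ 0)).sum = s.sum := by
  induction s using Multiset.induction with
  | empty => simp
  | cons x s ih =>
    rw [Multiset.filter_cons]
    by_cases hx : x = 0 <;> simp [hx, ih]

lemma mset_sum (a : PT n) : (mset a).sum = (dm a).card := by
  rw [dm_card, mset, sum_filter_ne_zero]
  rfl

lemma mset_sum_le (a : PT n) : (mset a).sum ≤ n := by
  rw [mset_sum]
  simpa [dm] using Finset.card_le_card (Finset.filter_subset _ (Finset.univ : Finset (Fin n)))

lemma mset_pos (a : PT n) : ∀ x ∈ mset a, 0 < x := by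
  intro x hx
  have := Multiset.of_mem_filter hx
  omega

lemma mset_eq_map_filter (a : PT n) :
    mset a = Multiset.map (fc a) (Finset.univ.filter fun t => fc a t ≠ 0).val := by
  rw [mset, Multiset.filter_map]
  rfl

lemma mset_card (a : PT n) : Multiset.card (mset a) =
    (Finset.univ.filter fun t => fc a t ≠ 0).card := by
  rw [mset_eq_map_filter, Multiset.card_map]
  rfl

lemma mset_count (a : PT n) (k : ℕ) (hk : k ≠ 0) :
    (mset a).count k = (Finset.univ.filter fun t => fc a t = k).card := by
  classical
  rw [mset, Multiset.count_filter, if_pos hk, Multiset.count_map]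
  have : (Multiset.filter (fun t => k = fc a t) Finset.univ.val)
      = (Finset.univ.filter fun t => fc a t = k).val := by
    simp only [Finset.filter_val]
    exact Multiset.filter_congr (fun t _ => by constructor <;> (intro h; omega))
  rw [this]
  rfl

lemma card_image_comp (c : PT n) :
    (Finset.univ.image fun y => PT.comp c y).card = (n+1) ^ PT.rank c := by
  classical
  set R : Finset (Fin n) := Finset.univ.filter fun t => ∃ i, c i = some t with hR
  have hpre : ∀ t : Fin n, t ∈ R → ∃ i, c i = some t := fun t ht => (Finset.mem_filter.mp ht).2
  have hpre' : ∀ t (ht : t ∈ R), c ((hpre t ht).choose) = some t :=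
    fun t ht => (hpre t ht).choose_spec
  have key : (Finset.univ.image fun y => PT.comp c y).card
      = (Finset.univ : Finset (↥R → Option (Fin n))).card := by
    apply Finset.card_bij' (i := fun w _ => fun t : ↥R => w ((hpre t.1 t.2).choose))
      (j := fun u _ => PT.comp c (fun t => if h : t ∈ R then u ⟨t, h⟩ else none))
    · intro w hw
      exact mem_univ _
    · intro u hu
      exact Finset.mem_image.mpr ⟨_, mem_univ _, rfl⟩
    · intro w hw
      obtain ⟨y, -, rfl⟩ := Finset.mem_image.mp hw
      funext i
      show (c i).bind _ = (c i).bind y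
      cases hci : c i with
      | none => rfl
      | some t =>
        have ht : t ∈ R := Finset.mem_filter.mpr ⟨mem_univ _, ⟨i, hci⟩⟩
        show (if h : t ∈ R then PT.comp c y ((hpre t h).choose) else none) = y t
        rw [dif_pos ht]
        show (c ((hpre t ht).choose)).bind y = y t
        rw [hpre' t ht]
        rfl
    · intro u hu
      funext t
      show (PT.comp c _) ((hpre t.1 t.2).choose) = u t
      show (c ((hpre t.1 t.2).choose)).bind _ = u t
      rw [hpre' t.1 t.2]
      show (if h : t.1 ∈ R then u ⟨t.1, h⟩ else none) = u t
      rw [dif_pos t.2]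
  rw [key, Finset.card_univ, Fintype.card_fun, Fintype.card_option, Fintype.card_fin,
    Fintype.card_coe]
  rfl

def Ep (a : PT n) (p : ℕ) : Finset (PT n) :=
  Finset.univ.filter fun x => PT.dmul a x x = x ∧ PT.rank (PT.comp x a) = p

section iso
variable {a b : PT n} (e : PT n ≃ PT n)
  (he : ∀ x y : PT n, e (PT.dmul a x y) = PT.dmul b (e x) (e y))

include he in
lemma rank_comp_eq (hn : 1 ≤ n) (x : PT n) :
    PT.rank (PT.comp x a) = PT.rank (PT.comp (e x) b) := by
  classical
  have himg : (Finset.univ.image fun y => PT.comp (PT.comp (e x) b) y)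
      = (Finset.univ.image fun y => PT.comp (PT.comp x a) y).image e := by
    calc (Finset.univ.image fun y => PT.comp (PT.comp (e x) b) y)
        = ((Finset.univ.image e).image fun y => PT.dmul b (e x) y) := by
          rw [Finset.image_univ_equiv]
          rfl
      _ = Finset.univ.image fun y => PT.dmul b (e x) (e y) := by
          rw [Finset.image_image]
          rfl
      _ = Finset.univ.image fun y => e (PT.dmul a x y) := by
          apply Finset.image_congr
          intro y _
          exact (he x y).symm
      _ = (Finset.univ.image fun y => PT.comp (PT.comp x a) y).image e := by
          rw [Finset.image_image]
          rfl
  have hc : (n+1) ^ PT.rank (PT.comp (e x) b) = (n+1) ^ PT.rank (PT.comp x a) := by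
    rw [← card_image_comp, ← card_image_comp, himg,
      Finset.card_image_of_injective _ e.injective]
  exact (Nat.pow_right_injective (by omega) hc).symm

include he in
lemma Ep_card_eq (hn : 1 ≤ n) (p : ℕ) : (Ep a p).card = (Ep b p).card := by
  classical
  have he' : ∀ u v : PT n, e.symm (PT.dmul b u v) = PT.dmul a (e.symm u) (e.symm v) := by
    intro u v
    apply e.injective
    rw [Equiv.apply_symm_apply, he, Equiv.apply_symm_apply, Equiv.apply_symm_apply]
  apply Finset.card_bij (fun x _ => e x)
  · intro x hx
    obtain ⟨-, h1, h2⟩ := Finset.mem_filter.mp hx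
    refine Finset.mem_filter.mpr ⟨mem_univ _, ?_, ?_⟩
    · rw [← he, h1]
    · rw [← rank_comp_eq e he hn x, h2]
  · intro x _ y _ h
    exact e.injective h
  · intro y hy
    obtain ⟨-, h1, h2⟩ := Finset.mem_filter.mp hy
    refine ⟨e.symm y, Finset.mem_filter.mpr ⟨mem_univ _, ?_, ?_⟩, e.apply_symm_apply y⟩
    · rw [← he', h1]
    · rw [rank_comp_eq e he hn (e.symm y), e.apply_symm_apply, h2]

end iso

def Tv (a : PT n) (p : ℕ) : Finset (Finset (Fin n)) :=
  Finset.univ.filter fun V => V.card = p ∧ (∀ v ∈ V, a v ≠ none) ∧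
    (∀ v ∈ V, ∀ w ∈ V, a v = a w → v = w)

def ranset (x : PT n) : Finset (Fin n) := Finset.univ.filter fun v => ∃ i, x i = some v

lemma mem_ranset {x : PT n} {v : Fin n} : v ∈ ranset x ↔ ∃ i, x i = some v := by
  simp [ranset]

lemma map_val_pmap {α : Type*} (p : α → Prop) (o : Option α) (H : ∀ v ∈ o, p v) :
    Option.map Subtype.val (Option.pmap (fun v (hv : p v) => (⟨v, hv⟩ : Subtype p)) o H) = o := by
  cases o <;> rfl

lemma pmap_map_val {α : Type*} (p : α → Prop) (o : Option (Subtype p)) (H) :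
    Option.pmap (fun v (hv : p v) => (⟨v, hv⟩ : Subtype p)) (Option.map Subtype.val o) H = o := by
  cases o with
  | none => rfl
  | some v => exact congrArg some (Subtype.ext rfl)

/-- key consequence of idempotency -/
lemma idem_inverts {a x : PT n} (hx : PT.dmul a x x = x) {v : Fin n}
    (hv : v ∈ ranset x) : ∃ t, a v = some t ∧ x t = some v := by
  obtain ⟨i, hi⟩ := mem_ranset.mp hv
  have h := congrFun hx i
  simp only [PT.dmul, PT.comp] at h
  rw [hi] at h
  have h2 : (a v).bind x = some v := h
  cases hav : a v with
  | none => rw [hav] at h2; exact absurd h2 (by simp)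
  | some t => rw [hav] at h2; exact ⟨t, rfl, h2⟩

lemma rank_comp_of_ran (a x : PT n) (V : Finset (Fin n)) (hran : ranset x = V)
    (hVd : ∀ v ∈ V, a v ≠ none) :
    PT.rank (PT.comp x a) = (V.image fun v => (a v).getD v).card := by
  unfold PT.rank
  congr 1
  ext t
  simp only [mem_filter, mem_univ, true_and, Finset.mem_image]
  constructor
  · rintro ⟨i, hi⟩
    simp only [PT.comp] at hi
    cases hxi : x i with
    | none => rw [hxi] at hi; exact absurd hi (by simp)
    | some v =>
      rw [hxi] at hi
      have hav : a v = some t := hi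
      have hv : v ∈ V := hran ▸ mem_ranset.mpr ⟨i, hxi⟩
      exact ⟨v, hv, by rw [hav]; rfl⟩
  · rintro ⟨v, hv, rfl⟩
    obtain ⟨i, hi⟩ := mem_ranset.mp (hran ▸ hv : v ∈ ranset x)
    refine ⟨i, ?_⟩
    show (x i).bind a = _
    rw [hi]
    show a v = some ((a v).getD v)
    cases hav : a v with
    | none => exact absurd hav (hVd v hv)
    | some w => rfl

lemma card_image_getD (a : PT n) (V : Finset (Fin n)) (hVd : ∀ v ∈ V, a v ≠ none)
    (hinj : ∀ v ∈ V, ∀ w ∈ V, a v = a w → v = w) :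
    (V.image fun v => (a v).getD v).card = V.card := by
  apply Finset.card_image_of_injOn
  intro v hv w hw h
  have h : (a v).getD v = (a w).getD w := h
  apply hinj v hv w hw
  cases hav : a v with
  | none => exact absurd hav (hVd v hv)
  | some s =>
    cases haw : a w with
    | none => exact absurd haw (hVd w hw)
    | some s' =>
      rw [hav, haw] at h
      simp only [Option.getD_some] at h
      exact congrArg some h

lemma Ep_card (a : PT n) (p : ℕ) : (Ep a p).card = (Tv a p).card * (p+1) ^ (n - p) := by
  classical
  have hfib : ∀ x ∈ Ep a p, ranset x ∈ (Finset.univ : Finset (Finset (Fin n))) :=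
    fun x _ => mem_univ _
  rw [Finset.card_eq_sum_card_fiberwise hfib]
  have hstep : ∀ V : Finset (Fin n),
      ((Ep a p).filter fun x => ranset x = V).card
        = if V ∈ Tv a p then (p+1) ^ (n - p) else 0 := by
    intro V
    have hmem : ∀ x, x ∈ (Ep a p).filter (fun x => ranset x = V) →
        PT.dmul a x x = x ∧ PT.rank (PT.comp x a) = p ∧ ranset x = V := by
      intro x hx
      obtain ⟨hx1, hx2⟩ := Finset.mem_filter.mp hx
      obtain ⟨-, h1, h2⟩ := Finset.mem_filter.mp hx1
      exact ⟨h1, h2, hx2⟩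
    by_cases hV : V ∈ Tv a p
    · rw [if_pos hV]
      obtain ⟨-, hcard, hVd, hinj⟩ := Finset.mem_filter.mp hV
      set aV : Finset (Fin n) := V.image fun v => (a v).getD v with haVdef
      have haVcard : aV.card = p := by rw [haVdef, card_image_getD a V hVd hinj, hcard]
      have hsel : ∀ t ∈ aV, ∃ v, v ∈ V ∧ a v = some t := by
        intro t ht
        obtain ⟨v, hv, hvt⟩ := Finset.mem_image.mp ht
        cases hav : a v with
        | none => exact absurd hav (hVd v hv)
        | some w =>
          refine ⟨v, hv, ?_⟩
          rw [hav] at hvt ⊢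
          simp only [Option.getD_some] at hvt
          rw [hvt]
      have hselV : ∀ t (ht : t ∈ aV), (hsel t ht).choose ∈ V :=
        fun t ht => (hsel t ht).choose_spec.1
      have hselA : ∀ t (ht : t ∈ aV), a ((hsel t ht).choose) = some t :=
        fun t ht => (hsel t ht).choose_spec.2
      have hranmem : ∀ x : PT n, ranset x = V → ∀ i v, x i = some v → v ∈ V := by
        intro x hr i v hiv
        exact hr ▸ mem_ranset.mpr ⟨i, hiv⟩
      rw [show ((Ep a p).filter fun x => ranset x = V).card
          = (Finset.univ : Finset (↥(Finset.univ \ aV) → Option ↥V)).card from ?_]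
      · rw [Finset.card_univ, Fintype.card_fun, Fintype.card_option, Fintype.card_coe,
          Fintype.card_coe, hcard, Finset.card_sdiff_of_subset (Finset.subset_univ _),
          Finset.card_univ, Fintype.card_fin, haVcard]
      · let F : PT n → (↥(Finset.univ \ aV) → Option ↥V) := fun x iw =>
          (x iw.1).bind (fun v => if hv : v ∈ V then some (⟨v, hv⟩ : ↥V) else none)
        let G : (↥(Finset.univ \ aV) → Option ↥V) → PT n := fun u i =>
          if h : i ∈ aV then some ((hsel i h).choose)
          else Option.map Subtype.val (u ⟨i, Finset.mem_sdiff.mpr ⟨mem_univ _, h⟩⟩)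
        have hGval : ∀ u i (h : i ∈ aV), G u i = some ((hsel i h).choose) := by
          intro u i h; show dite _ _ _ = _; rw [dif_pos h]
        have hGval' : ∀ u i (h : i ∉ aV), G u i
            = Option.map Subtype.val (u ⟨i, Finset.mem_sdiff.mpr ⟨mem_univ _, h⟩⟩) := by
          intro u i h; show dite _ _ _ = _; rw [dif_neg h]
        refine Finset.card_bij' (fun x _ => F x) (fun u _ => G u) ?_ ?_ ?_ ?_
        · intro x hx
          exact mem_univ _
        · -- G u lands in the fiber
          intro u _
          have hxran : ranset (G u) = V := by
            ext v
            rw [mem_ranset]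
            constructor
            · rintro ⟨i, hi⟩
              by_cases h : i ∈ aV
              · rw [hGval u i h] at hi
                rw [← Option.some_inj.mp hi]; exact hselV i h
              · rw [hGval' u i h] at hi
                cases hu : u ⟨i, Finset.mem_sdiff.mpr ⟨mem_univ _, h⟩⟩ with
                | none => rw [hu] at hi; exact absurd hi (by simp)
                | some w =>
                  rw [hu] at hi; simp only [Option.map_some] at hi
                  rw [← Option.some_inj.mp hi]; exact w.2
            · intro hv
              cases hav : a v with
              | none => exact absurd hav (hVd v hv)
              | some t =>
                have ht : t ∈ aV := Finset.mem_image.mpr ⟨v, hv, by rw [hav]; rfl⟩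
                refine ⟨t, ?_⟩
                rw [hGval u t ht]
                congr 1
                exact hinj _ (hselV t ht) v hv (by rw [hselA t ht, hav])
          have hidem : PT.dmul a (G u) (G u) = G u := by
            funext i
            show ((G u i).bind a).bind (G u) = G u i
            cases hxi : G u i with
            | none => rfl
            | some v =>
              have hv : v ∈ V := hranmem (G u) hxran i v hxi
              cases hav : a v with
              | none => exact absurd hav (hVd v hv)
              | some t =>
                have ht : t ∈ aV := Finset.mem_image.mpr ⟨v, hv, by rw [hav]; rfl⟩
                show (a v).bind (G u) = some v
                rw [hav]
                show G u t = some v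
                rw [hGval u t ht]
                congr 1
                exact hinj _ (hselV t ht) v hv (by rw [hselA t ht, hav])
          refine Finset.mem_filter.mpr ⟨Finset.mem_filter.mpr ⟨mem_univ _, hidem, ?_⟩, hxran⟩
          rw [rank_comp_of_ran a (G u) V hxran hVd, ← haVdef, haVcard]
        · -- left inverse : G (F x) = x on the fiber
          intro x hx
          obtain ⟨h1, -, hr⟩ := hmem x hx
          funext i
          show G (F x) i = x i
          by_cases h : i ∈ aV
          · rw [hGval _ i h]
            set v := (hsel i h).choose with hvdef
            obtain ⟨t, hat, hxt⟩ := idem_inverts h1 (hr ▸ hselV i h : v ∈ ranset x)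
            have hti : t = i := by
              have := (hselA i h).symm.trans hat
              exact Option.some_inj.mp this.symm
            rw [← hti, hxt]
          · rw [hGval' _ i h]
            show Option.map Subtype.val ((x i).bind _) = x i
            cases hxi : x i with
            | none => rfl
            | some v =>
              have hv : v ∈ V := hranmem x hr i v hxi
              show Option.map Subtype.val ((some v).bind
                (fun v => if hv : v ∈ V then some (⟨v, hv⟩ : ↥V) else none)) = some v
              show Option.map Subtype.val
                (if hv : v ∈ V then some (⟨v, hv⟩ : ↥V) else none) = some v
              rw [dif_pos hv]
              rfl
        · -- right inverse : F (G u) = u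
          intro u hu
          funext iw
          show F (G u) iw = u iw
          obtain ⟨i0, hi0⟩ := iw
          have h : i0 ∉ aV := (Finset.mem_sdiff.mp hi0).2
          show (G u i0).bind _ = _
          rw [hGval' u i0 h]
          cases hu0 : u ⟨i0, Finset.mem_sdiff.mpr ⟨mem_univ _, h⟩⟩ with
          | none => rfl
          | some w =>
            show (if hv : w.1 ∈ V then some (⟨w.1, hv⟩ : ↥V) else none) = some w
            rw [dif_pos w.2]
    · rw [if_neg hV]
      rw [Finset.card_eq_zero, Finset.filter_eq_empty_iff]
      intro x hx
      obtain ⟨-, h1, h2⟩ := Finset.mem_filter.mp hx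
      intro hr
      apply hV
      have hVd : ∀ v ∈ V, a v ≠ none := by
        intro v hv hav
        obtain ⟨t, ht, -⟩ := idem_inverts h1 (hr ▸ hv : v ∈ ranset x)
        rw [hav] at ht; exact absurd ht (by simp)
      have hinj : ∀ v ∈ V, ∀ w ∈ V, a v = a w → v = w := by
        intro v hv w hw havw
        obtain ⟨t, hat, hxt⟩ := idem_inverts h1 (hr ▸ hv : v ∈ ranset x)
        obtain ⟨t', hat', hxt'⟩ := idem_inverts h1 (hr ▸ hw : w ∈ ranset x)
        have htt : t = t' := by
          rw [havw, hat'] at hat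
          exact (Option.some_inj.mp hat).symm
        rw [htt, hxt'] at hxt
        exact (Option.some_inj.mp hxt).symm
      have hcard : V.card = p := by
        rw [← h2, rank_comp_of_ran a x V hr hVd, card_image_getD a V hVd hinj]
      exact Finset.mem_filter.mpr ⟨mem_univ _, hcard, hVd, hinj⟩
  rw [Finset.sum_congr rfl (fun V _ => hstep V), Finset.sum_ite_mem,
    Finset.univ_inter, Finset.sum_const, smul_eq_mul]

lemma powersetCard_self' {α : Type*} (s : Multiset α) :
    s.powersetCard (Multiset.card s) = {s} := by
  have hc : Multiset.card (s.powersetCard (Multiset.card s)) = 1 := by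
    rw [Multiset.card_powersetCard, Nat.choose_self]
  obtain ⟨t, ht⟩ := Multiset.card_eq_one.mp hc
  have hs : s ∈ s.powersetCard (Multiset.card s) :=
    Multiset.mem_powersetCard.mpr ⟨le_refl s, rfl⟩
  rw [ht] at hs ⊢
  rw [Multiset.mem_singleton.mp hs]

lemma esymm_card_eq_prod {R : Type*} [CommSemiring R] (s : Multiset R) :
    s.esymm (Multiset.card s) = s.prod := by
  rw [Multiset.esymm, powersetCard_self', Multiset.map_singleton, Multiset.sum_singleton]

lemma esymm_eq_zero {R : Type*} [CommSemiring R] (s : Multiset R) (p : ℕ)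
    (hp : Multiset.card s < p) : s.esymm p = 0 := by
  rw [Multiset.esymm, Multiset.powersetCard_eq_empty p hp]
  rfl

lemma esymm_map_cast (s : Multiset ℕ) (p : ℕ) :
    ((s.map (fun k : ℕ => (k : ℤ))).esymm p) = ((s.esymm p : ℕ) : ℤ) := by
  rw [Multiset.esymm, Multiset.esymm, Multiset.powersetCard_map (fun k : ℕ => (k : ℤ)) p s,
    Nat.cast_multiset_sum, Multiset.map_map, Multiset.map_map]
  congr 1
  apply Multiset.map_congr rfl
  intro t _
  exact (Nat.cast_multiset_prod t).symm

lemma esymm_inj (s t : Multiset ℕ) (hs : ∀ x ∈ s, 0 < x) (ht : ∀ x ∈ t, 0 < x)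
    (h : ∀ p, s.esymm p = t.esymm p) : s = t := by
  -- cards are equal
  have hprod : ∀ (u : Multiset ℕ), (∀ x ∈ u, 0 < x) → u.esymm (Multiset.card u) ≠ 0 := by
    intro u hu
    rw [esymm_card_eq_prod]
    exact (Multiset.prod_pos hu).ne'
  have hcard : Multiset.card s = Multiset.card t := by
    by_contra hne
    rcases Nat.lt_or_ge (Multiset.card s) (Multiset.card t) with hlt | hge
    · exact hprod t ht (by rw [← h, esymm_eq_zero s _ hlt])
    · have hlt : Multiset.card t < Multiset.card s := by omega
      exact hprod s hs (by rw [h, esymm_eq_zero t _ hlt])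
  -- move to ℤ
  set si := s.map (fun k : ℕ => (k : ℤ)) with hsi
  set ti := t.map (fun k : ℕ => (k : ℤ)) with hti
  have hcardi : Multiset.card si = Multiset.card ti := by
    simp [hsi, hti, hcard]
  have hesymm : ∀ p, si.esymm p = ti.esymm p := by
    intro p
    rw [hsi, hti, esymm_map_cast, esymm_map_cast, h]
  -- the polynomials agree
  have hP : (si.map fun r => X + C r).prod = (ti.map fun r => X + C r).prod := by
    have hdeg : ∀ (u : Multiset ℤ),
        ((u.map fun r => X + C r).prod).natDegree ≤ Multiset.card u := by
      intro u
      refine le_trans (Polynomial.natDegree_multiset_prod_le _) ?_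
      rw [Multiset.map_map,
        show (Multiset.map (Polynomial.natDegree ∘ fun r => X + C r) u)
          = Multiset.map (fun _ => 1) u from
          Multiset.map_congr rfl (fun r _ => Polynomial.natDegree_X_add_C r)]
      simp
    ext k
    rcases le_or_gt k (Multiset.card si) with hk | hk
    · rw [Multiset.prod_X_add_C_coeff si hk, Multiset.prod_X_add_C_coeff ti (hcardi ▸ hk),
        hcardi, hesymm]
    · rw [Polynomial.coeff_eq_zero_of_natDegree_lt (lt_of_le_of_lt (hdeg si) hk),
        Polynomial.coeff_eq_zero_of_natDegree_lt
          (lt_of_le_of_lt (hdeg ti) (hcardi ▸ hk))]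
  -- take roots
  have hroots : ∀ (u : Multiset ℤ),
      ((u.map fun r => X + C r).prod).roots = u.map (fun r => -r) := by
    intro u
    have : (u.map fun r => X + C r) = ((u.map fun r => -r).map fun r => X - C r) := by
      rw [Multiset.map_map]
      apply Multiset.map_congr rfl
      intro r _
      simp [sub_neg_eq_add]
    rw [this, Polynomial.roots_multiset_prod_X_sub_C]
  have : si.map (fun r => -r) = ti.map (fun r => -r) := by
    rw [← hroots, ← hroots, hP]
  have hsiti : si = ti := Multiset.map_injective neg_injective this
  exact Multiset.map_injective Nat.cast_injective (hsi ▸ hti ▸ hsiti)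

lemma mem_fib {a : PT n} {t v : Fin n} : v ∈ fib a t ↔ a v = some t := by
  simp [fib]

lemma getD_eq_iff {a : PT n} {v t : Fin n} (hv : a v ≠ none) :
    (a v).getD v = t ↔ a v = some t := by
  cases hav : a v with
  | none => exact absurd hav hv
  | some w => simp [hav]

def img (a : PT n) (V : Finset (Fin n)) : Finset (Fin n) := V.image fun v => (a v).getD v

lemma mem_img {a : PT n} {V : Finset (Fin n)} {t : Fin n} :
    t ∈ img a V ↔ ∃ v, v ∈ V ∧ (a v).getD v = t := by
  simp [img]

lemma Tv_card (a : PT n) (p : ℕ) : (Tv a p).card = (mset a).esymm p := by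
  classical
  set Rnz : Finset (Fin n) := Finset.univ.filter fun t => fc a t ≠ 0 with hRnz
  rw [mset_eq_map_filter, ← hRnz, Finset.esymm_map_val]
  have hTv : ∀ V, V ∈ Tv a p ↔
      V.card = p ∧ (∀ v ∈ V, a v ≠ none) ∧ (∀ v ∈ V, ∀ w ∈ V, a v = a w → v = w) := by
    intro V
    simp [Tv]
  have hmap : ∀ V ∈ Tv a p, img a V ∈ Finset.powersetCard p Rnz := by
    intro V hV
    obtain ⟨hcard, hVd, hinj⟩ := (hTv V).mp hV
    refine Finset.mem_powersetCard.mpr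
      ⟨?_, by rw [show (img a V).card = V.card from card_image_getD a V hVd hinj, hcard]⟩
    intro t ht
    obtain ⟨v, hv, hvt⟩ := mem_img.mp ht
    have hav : a v = some t := (getD_eq_iff (hVd v hv)).mp hvt
    rw [hRnz]
    refine Finset.mem_filter.mpr ⟨mem_univ _, ?_⟩
    exact Finset.card_ne_zero_of_mem (mem_fib.mpr hav)
  rw [Finset.card_eq_sum_card_fiberwise hmap]
  apply Finset.sum_congr rfl
  intro T hT
  rw [show T.prod (fc a) = ∏ t ∈ T, (fib a t).card from rfl, ← Finset.card_pi]
  refine Finset.card_bij'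
    (fun V hV => fun t (ht : t ∈ T) =>
      (mem_img.mp (((Finset.mem_filter.mp hV).2 : img a V = T) ▸ ht)).choose)
    (fun g _ => T.attach.image fun t => g t.1 t.2) ?hi ?hj ?li ?ri
  case hi =>
    intro V hV
    obtain ⟨hV1, hV2⟩ := Finset.mem_filter.mp hV
    obtain ⟨hcard, hVd, hinj⟩ := (hTv V).mp hV1
    rw [Finset.mem_pi]
    intro t ht
    have hEx : ∃ v, v ∈ V ∧ (a v).getD v = t := mem_img.mp ((hV2 : img a V = T) ▸ ht)
    exact mem_fib.mpr ((getD_eq_iff (hVd _ hEx.choose_spec.1)).mp hEx.choose_spec.2)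
  case hj =>
    intro g hg
    rw [Finset.mem_pi] at hg
    have hval : ∀ t (ht : t ∈ T), a (g t ht) = some t := fun t ht => mem_fib.mp (hg t ht)
    have hVd : ∀ v ∈ T.attach.image fun t => g t.1 t.2, a v ≠ none := by
      intro v hv
      obtain ⟨t, -, rfl⟩ := Finset.mem_image.mp hv
      rw [hval t.1 t.2]
      simp
    have hinj : ∀ v ∈ T.attach.image fun t => g t.1 t.2,
        ∀ w ∈ T.attach.image fun t => g t.1 t.2, a v = a w → v = w := by
      intro v hv w hw havw
      obtain ⟨t, -, rfl⟩ := Finset.mem_image.mp hv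
      obtain ⟨t', -, rfl⟩ := Finset.mem_image.mp hw
      rw [hval t.1 t.2, hval t'.1 t'.2] at havw
      have htt : t = t' := Subtype.ext (Option.some_inj.mp havw)
      rw [htt]
    have himgT : img a (T.attach.image fun t => g t.1 t.2) = T := by
      ext t
      rw [mem_img]
      constructor
      · rintro ⟨v, hv, hvt⟩
        have hv' := hv
        obtain ⟨t', -, rfl⟩ := Finset.mem_image.mp hv
        have h2 : a (g t'.1 t'.2) = some t := (getD_eq_iff (hVd _ hv')).mp hvt
        rw [hval t'.1 t'.2] at h2
        rw [← Option.some_inj.mp h2]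
        exact t'.2
      · intro ht
        refine ⟨g t ht, Finset.mem_image.mpr ⟨⟨t, ht⟩, Finset.mem_attach _ _, rfl⟩, ?_⟩
        exact (getD_eq_iff (by rw [hval t ht]; simp)).mpr (hval t ht)
    refine Finset.mem_filter.mpr ⟨(hTv _).mpr ⟨?_, hVd, hinj⟩, himgT⟩
    rw [← card_image_getD a _ hVd hinj]
    show (img a _).card = p
    rw [himgT]
    exact (Finset.mem_powersetCard.mp hT).2
  case li =>
    intro V hV
    obtain ⟨hV1, hV2⟩ := Finset.mem_filter.mp hV
    obtain ⟨hcard, hVd, hinj⟩ := (hTv V).mp hV1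
    ext v
    constructor
    · intro hv
      obtain ⟨t, -, rfl⟩ := Finset.mem_image.mp hv
      have hEx : ∃ w, w ∈ V ∧ (a w).getD w = t.1 := mem_img.mp ((hV2 : img a V = T) ▸ t.2)
      exact hEx.choose_spec.1
    · intro hv
      have ht : (a v).getD v ∈ T := by
        rw [← (hV2 : img a V = T)]
        exact mem_img.mpr ⟨v, hv, rfl⟩
      refine Finset.mem_image.mpr ⟨⟨(a v).getD v, ht⟩, Finset.mem_attach _ _, ?_⟩
      have hEx : ∃ w, w ∈ V ∧ (a w).getD w = (a v).getD v :=
        mem_img.mp ((hV2 : img a V = T) ▸ ht)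
      exact hinj _ hEx.choose_spec.1 v hv
        (((getD_eq_iff (hVd _ hEx.choose_spec.1)).mp hEx.choose_spec.2).trans
          ((getD_eq_iff (hVd v hv)).mp rfl).symm)
  case ri =>
    intro g hg
    rw [Finset.mem_pi] at hg
    have hval : ∀ t (ht : t ∈ T), a (g t ht) = some t := fun t ht => mem_fib.mp (hg t ht)
    have hVd : ∀ v ∈ T.attach.image fun t => g t.1 t.2, a v ≠ none := by
      intro v hv
      obtain ⟨t, -, rfl⟩ := Finset.mem_image.mp hv
      rw [hval t.1 t.2]
      simp
    have hinj : ∀ v ∈ T.attach.image fun t => g t.1 t.2,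
        ∀ w ∈ T.attach.image fun t => g t.1 t.2, a v = a w → v = w := by
      intro v hv w hw havw
      obtain ⟨t, -, rfl⟩ := Finset.mem_image.mp hv
      obtain ⟨t', -, rfl⟩ := Finset.mem_image.mp hw
      rw [hval t.1 t.2, hval t'.1 t'.2] at havw
      have htt : t = t' := Subtype.ext (Option.some_inj.mp havw)
      rw [htt]
    funext t ht
    have hEx : ∃ v, v ∈ (T.attach.image fun t => g t.1 t.2) ∧ (a v).getD v = t := by
      refine ⟨g t ht, Finset.mem_image.mpr ⟨⟨t, ht⟩, Finset.mem_attach _ _, rfl⟩, ?_⟩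
      exact (getD_eq_iff (by rw [hval t ht]; simp)).mpr (hval t ht)
    show hEx.choose = g t ht
    obtain ⟨hv, hvt⟩ := hEx.choose_spec
    have hv' := hv
    obtain ⟨t', -, heq⟩ := Finset.mem_image.mp hv
    have ha1 : a hEx.choose = some t'.1 := by rw [← heq, hval t'.1 t'.2]
    have htt : t'.1 = t := by
      have h3 : a hEx.choose = some t := (getD_eq_iff (by rw [ha1]; simp)).mp hvt
      rw [ha1] at h3
      exact Option.some_inj.mp h3
    have ha2 : a hEx.choose = a (g t ht) := by rw [ha1, htt, hval t ht]
    exact hinj _ hv' _ (Finset.mem_image.mpr ⟨⟨t, ht⟩, Finset.mem_attach _ _, rfl⟩) ha2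

lemma card_filter_not {α : Type*} [Fintype α] [DecidableEq α] (p : α → Prop) [DecidablePred p] :
    (Finset.univ.filter fun x => ¬ p x).card = Fintype.card α - (Finset.univ.filter p).card := by
  rw [Finset.filter_not, Finset.card_sdiff_of_subset (Finset.filter_subset _ _), Finset.card_univ]

lemma mset_eq_imp_iso (a b : PT n) (h : mset a = mset b) :
    ∃ e : PT n ≃ PT n, ∀ x y : PT n, e (PT.dmul a x y) = PT.dmul b (e x) (e y) := by
  classical
  have hdm : (dm a).card = (dm b).card := by rw [← mset_sum, ← mset_sum, h]
  have hlev : ∀ k : ℕ, Fintype.card {t // fc b t = k} = Fintype.card {t // fc a t = k} := by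
    intro k
    rw [Fintype.card_subtype, Fintype.card_subtype]
    rcases eq_or_ne k 0 with rfl | hk
    · have h1 : ∀ c : PT n, (Finset.univ.filter fun t => fc c t = 0).card
          = n - (Finset.univ.filter fun t => fc c t ≠ 0).card := by
        intro c
        rw [show (Finset.univ.filter fun t => fc c t = 0)
            = (Finset.univ.filter fun t => ¬ fc c t ≠ 0) from
          Finset.filter_congr (fun t _ => by simp), card_filter_not, Fintype.card_fin]
      rw [h1 a, h1 b, ← mset_card, ← mset_card, h]
    · rw [← mset_count a k hk, ← mset_count b k hk, h]
  let levelEquiv : ∀ k, {t // fc b t = k} ≃ {t // fc a t = k} :=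
    fun k => Fintype.equivOfCardEq (hlev k)
  let g : Fin n ≃ Fin n := (Equiv.sigmaFiberEquiv (fc b)).symm.trans
    ((Equiv.sigmaCongrRight levelEquiv).trans (Equiv.sigmaFiberEquiv (fc a)))
  have hg : ∀ t, fc a (g t) = fc b t := fun t =>
    ((Equiv.sigmaCongrRight levelEquiv) ((Equiv.sigmaFiberEquiv (fc b)).symm t)).2.2
  have hfibcard : ∀ o : Option (Fin n),
      Fintype.card {i // b i = o} = Fintype.card {i // a i = Option.map g o} := by
    intro o
    cases o with
    | some t =>
      rw [Fintype.card_subtype, Fintype.card_subtype]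
      simp only [Option.map_some]
      exact (hg t).symm
    | none =>
      rw [Fintype.card_subtype, Fintype.card_subtype]
      simp only [Option.map_none]
      have h1 : ∀ c : PT n, (Finset.univ.filter fun i => c i = none).card
          = n - (dm c).card := by
        intro c
        rw [show (Finset.univ.filter fun i => c i = none)
            = (Finset.univ.filter fun i => ¬ c i ≠ none) from
          Finset.filter_congr (fun i _ => by simp), card_filter_not, Fintype.card_fin]
        rfl
      rw [h1 a, h1 b, hdm]
  let compEquiv : ∀ o : Option (Fin n), {i // b i = o} ≃ {i // a i = Option.map g o} :=
    fun o => Fintype.equivOfCardEq (hfibcard o)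
  let π : Fin n ≃ Fin n := (Equiv.sigmaFiberEquiv b).symm.trans
    ((Equiv.sigmaCongrRight compEquiv).trans
      ((Equiv.sigmaCongrLeft (β := fun o => {i // a i = o}) g.optionCongr).trans
        (Equiv.sigmaFiberEquiv a)))
  have hπ : ∀ i, a (π i) = Option.map g (b i) := fun i =>
    ((compEquiv (b i)) ⟨i, rfl⟩).2
  have hπ' : ∀ j, b (π.symm j) = Option.map g.symm (a j) := by
    intro j
    have h1 := hπ (π.symm j)
    rw [Equiv.apply_symm_apply] at h1
    rw [h1, Option.map_map]
    cases b (π.symm j) with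
    | none => rfl
    | some w => simp
  refine ⟨{
    toFun := fun x i => Option.map π.symm (x (g i))
    invFun := fun x i => Option.map π (x (g.symm i))
    left_inv := by
      intro x
      funext i
      simp only [Equiv.apply_symm_apply, Option.map_map]
      simp
    right_inv := by
      intro x
      funext i
      simp only [Equiv.symm_apply_apply, Option.map_map]
      simp }, ?_⟩
  intro x y
  funext i
  show Option.map π.symm (PT.dmul a x y (g i))
      = ((Option.map π.symm (x (g i))).bind b).bind (fun j => Option.map π.symm (y (g j)))
  show Option.map π.symm (((x (g i)).bind a).bind y) = _
  cases hx : x (g i) with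
  | none => rfl
  | some j =>
    show Option.map π.symm ((a j).bind y)
        = ((some (π.symm j)).bind b).bind (fun j => Option.map π.symm (y (g j)))
    show Option.map π.symm ((a j).bind y)
        = (b (π.symm j)).bind (fun j => Option.map π.symm (y (g j)))
    rw [hπ' j]
    cases ha : a j with
    | none => rfl
    | some t =>
      show Option.map π.symm (y t) = Option.map π.symm (y (g (g.symm t)))
      rw [Equiv.apply_symm_apply]

lemma length_le_sum (l : List ℕ) (hl : ∀ x ∈ l, x ≠ 0) : l.length ≤ l.sum := by
  induction l with
  | nil => simp
  | cons c l ih =>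
    simp only [List.length_cons, List.sum_cons]
    have h1 : c ≠ 0 := hl c List.mem_cons_self
    have h2 := ih (fun x hx => hl x (List.mem_cons_of_mem c hx))
    omega

lemma realize (l : List ℕ) (hl : ∀ x ∈ l, x ≠ 0) (hs : l.sum ≤ n) :
    ∃ a : PT n, mset a = ↑l := by
  classical
  induction l with
  | nil =>
    refine ⟨fun _ => none, ?_⟩
    rw [show ((↑([] : List ℕ)) : Multiset ℕ) = 0 from rfl]
    rw [mset, Multiset.filter_eq_nil]
    intro k hk
    obtain ⟨t, -, rfl⟩ := Multiset.mem_map.mp hk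
    simp [fc, fib]
  | cons c l ih =>
    have hc : c ≠ 0 := hl c List.mem_cons_self
    have hsum : l.sum ≤ n := by simp only [List.sum_cons] at hs; omega
    obtain ⟨a', ha'⟩ := ih (fun x hx => hl x (List.mem_cons_of_mem c hx)) hsum
    have hdm : (dm a').card = l.sum := by
      rw [← mset_sum, ha']
      exact Multiset.sum_coe l
    -- find c fresh points
    have hU : c ≤ (Finset.univ \ dm a').card := by
      rw [Finset.card_sdiff_of_subset (Finset.subset_univ _), Finset.card_univ, Fintype.card_fin, hdm]
      simp only [List.sum_cons] at hs
      omega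
    obtain ⟨S, hSsub, hScard⟩ := Finset.exists_subset_card_eq hU
    have hSnone : ∀ i ∈ S, a' i = none := by
      intro i hi
      have := Finset.mem_sdiff.mp (hSsub hi)
      simpa [dm] using this.2
    -- find a fresh value
    have hlen : (Finset.univ.filter fun t => fc a' t ≠ 0).card < n := by
      rw [← mset_card, ha']
      have h2 : Multiset.card (↑l : Multiset ℕ) = l.length := rfl
      rw [h2]
      have := length_le_sum l (fun x hx => hl x (List.mem_cons_of_mem c hx))
      simp only [List.sum_cons] at hs
      omega
    have hex : ∃ t0, fc a' t0 = 0 := by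
      have : ((Finset.univ : Finset (Fin n)) \ (Finset.univ.filter fun t => fc a' t ≠ 0)).Nonempty := by
        rw [← Finset.card_pos, Finset.card_sdiff_of_subset (Finset.subset_univ _), Finset.card_univ,
          Fintype.card_fin]
        omega
      obtain ⟨t0, ht0⟩ := this
      have := (Finset.mem_sdiff.mp ht0).2
      simp only [Finset.mem_filter, mem_univ, true_and, not_not] at this
      exact ⟨t0, this⟩
    obtain ⟨t0, ht0⟩ := hex
    have hfib0 : fib a' t0 = ∅ := Finset.card_eq_zero.mp ht0
    refine ⟨fun i => if i ∈ S then some t0 else a' i, ?_⟩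
    set a : PT n := fun i => if i ∈ S then some t0 else a' i with hadef
    have hfc_ne : ∀ t, t ≠ t0 → fc a t = fc a' t := by
      intro t ht
      unfold fc
      congr 1
      ext i
      simp only [fib, Finset.mem_filter, mem_univ, true_and]
      by_cases hi : i ∈ S
      · rw [show a i = some t0 from by rw [hadef]; simp [hi]]
        rw [hSnone i hi]
        constructor
        · intro hcon
          exact absurd (Option.some_inj.mp hcon).symm ht
        · intro hcon
          exact absurd hcon (by simp)
      · rw [show a i = a' i from by rw [hadef]; simp [hi]]
    have hfc_t0 : fc a t0 = c := by
      rw [← hScard]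
      unfold fc
      congr 1
      ext i
      simp only [fib, Finset.mem_filter, mem_univ, true_and]
      by_cases hi : i ∈ S
      · rw [show a i = some t0 from by rw [hadef]; simp [hi]]
        simp [hi]
      · rw [show a i = a' i from by rw [hadef]; simp [hi]]
        constructor
        · intro hcon
          have hmem : i ∈ fib a' t0 := Finset.mem_filter.mpr ⟨mem_univ _, hcon⟩
          rw [hfib0] at hmem
          exact absurd hmem (Finset.notMem_empty i)
        · intro hcon
          exact absurd hcon hi
    -- assemble the multiset identity
    have huniv : (Finset.univ : Finset (Fin n)).val = t0 ::ₘ (Finset.univ.erase t0).val := by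
      rw [Finset.erase_val]
      exact (Multiset.cons_erase (Finset.mem_def.mp (Finset.mem_univ t0))).symm
    have hmap_erase : Multiset.map (fc a) (Finset.univ.erase t0).val
        = Multiset.map (fc a') (Finset.univ.erase t0).val := by
      apply Multiset.map_congr rfl
      intro t ht
      exact hfc_ne t (Finset.ne_of_mem_erase (Finset.mem_def.mpr ht))
    show mset a = ↑(c :: l)
    rw [mset, huniv, Multiset.map_cons, Multiset.filter_cons, hfc_t0, hmap_erase, if_pos hc]
    have hb : mset a' = Multiset.filter (fun k => k ≠ 0)
        (Multiset.map (fc a') (Finset.univ.erase t0).val) := by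
      rw [mset, huniv, Multiset.map_cons, Multiset.filter_cons, ht0, if_neg (by simp)]
      simp
    rw [← hb, ha', Multiset.singleton_add, Multiset.cons_coe]


lemma iso_imp_mset_eq {a b : PT n} (hn : 1 ≤ n) (e : PT n ≃ PT n)
    (he : ∀ x y : PT n, e (PT.dmul a x y) = PT.dmul b (e x) (e y)) :
    mset a = mset b := by
  have hTv : ∀ p, (Tv a p).card = (Tv b p).card := by
    intro p
    have h3 := Ep_card_eq e he hn p
    rw [Ep_card a p, Ep_card b p] at h3
    exact Nat.eq_of_mul_eq_mul_right (pow_pos (Nat.succ_pos p) _) h3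
  apply esymm_inj _ _ (mset_pos a) (mset_pos b)
  intro p
  rw [← Tv_card, ← Tv_card, hTv p]

end PTaux

open PTaux in
/-- There are exactly `∑_{k=0}^{n} p(k)` pairwise non-isomorphic semigroups obtained from
`PT n` by deformed multiplication. -/
theorem card_iso_classes {n : ℕ} :
    ∃ f : PT n → Fin (∑ k ∈ Finset.range (n + 1), Fintype.card (Nat.Partition k)),
      Function.Surjective f ∧
        ∀ a b : PT n, f a = f b ↔
          ∃ e : PT n ≃ PT n, ∀ x y : PT n, e (PT.dmul a x y) = PT.dmul b (e x) (e y) := by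
  classical
  have hiso : ∀ a b : PT n,
      (∃ e : PT n ≃ PT n, ∀ x y : PT n, e (PT.dmul a x y) = PT.dmul b (e x) (e y)) →
      mset a = mset b := by
    rintro a b ⟨e, he⟩
    rcases Nat.eq_zero_or_pos n with hn0 | hn
    · subst hn0
      have hab : a = b := funext fun i => i.elim0
      rw [hab]
    · exact iso_imp_mset_eq hn e he
  have hcard : Fintype.card (Σ k : Fin (n+1), Nat.Partition k)
      = ∑ k ∈ Finset.range (n + 1), Fintype.card (Nat.Partition k) := by
    rw [Fintype.card_sigma]
    exact Fin.sum_univ_eq_sum_range (fun k => Fintype.card (Nat.Partition k)) (n+1)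
  let E : (Σ k : Fin (n+1), Nat.Partition k)
      ≃ Fin (∑ k ∈ Finset.range (n + 1), Fintype.card (Nat.Partition k)) :=
    Fintype.equivFinOfCardEq hcard
  let enc : Multiset ℕ → Σ k : Fin (n+1), Nat.Partition k := fun s =>
    if h : (∀ x ∈ s, 0 < x) ∧ s.sum ≤ n then
      ⟨⟨s.sum, Nat.lt_succ_of_le h.2⟩, ⟨s, fun hx => h.1 _ hx, rfl⟩⟩
    else ⟨⟨0, Nat.succ_pos n⟩, ⟨0, fun hx => absurd hx (Multiset.notMem_zero _), rfl⟩⟩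
  have hdec : ∀ s : Multiset ℕ, (∀ x ∈ s, 0 < x) → s.sum ≤ n → (enc s).2.parts = s := by
    intro s h1 h2
    show (dite _ _ _ : Σ k : Fin (n+1), Nat.Partition k).2.parts = s
    rw [dif_pos ⟨h1, h2⟩]
  have henc : ∀ x : Σ k : Fin (n+1), Nat.Partition k, enc (x.2.parts) = x := by
    rintro ⟨⟨k, hk⟩, parts, hpos, hsum⟩
    have hsum' : parts.sum = k := hsum
    subst hsum'
    have hc : (∀ y ∈ parts, 0 < y) ∧ parts.sum ≤ n :=
      ⟨fun y hy => hpos hy, by omega⟩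
    show dite _ _ _ = _
    rw [dif_pos hc]
  refine ⟨fun a => E (enc (mset a)), ?_, ?_⟩
  · intro y
    set x := E.symm y with hx
    have h1 : ∀ v ∈ (x.2.parts).toList, v ≠ 0 := by
      intro v hv
      have := x.2.parts_pos (by rwa [← Multiset.mem_toList])
      omega
    have h2 : (x.2.parts).toList.sum ≤ n := by
      have hs : (x.2.parts).toList.sum = x.2.parts.sum := by
        rw [← Multiset.sum_coe, Multiset.coe_toList]
      rw [hs, x.2.parts_sum]
      exact Nat.lt_succ_iff.mp x.1.2
    obtain ⟨a, ha⟩ := realize (x.2.parts).toList h1 h2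
    refine ⟨a, ?_⟩
    show E (enc (mset a)) = y
    rw [ha, Multiset.coe_toList, henc x, hx, Equiv.apply_symm_apply]
  · intro a b
    constructor
    · intro hf
      have h1 : enc (mset a) = enc (mset b) := E.injective hf
      have h2 : mset a = mset b := by
        rw [← hdec (mset a) (mset_pos a) (mset_sum_le a),
          ← hdec (mset b) (mset_pos b) (mset_sum_le b), h1]
      exact mset_eq_imp_iso a b h2
    · intro hex
      have h2 : mset a = mset b := hiso a b hex
      show E (enc (mset a)) = E (enc (mset b))
      rw [h2]
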